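/- For every monotone inflationary function h : ℕ → ℕ, every ordinal α ≤ ω^ω, and every x ∈ ℕ, iterating h exactly h_α(x) times starting from x yields h^α(x): h^{(h_α(x))}(x) = h^α(x), where the exponent on the left denotes ordinary function iteration. -/

import Mathlib

open Ordinal

/-- The graph of the Hardy hierarchy `h^α` for ordinals `α ≤ ω^ω`, defined with
the standard fundamental sequences `(ω^ω)(x) = ω^(x+1)` and
`(β + ω^(k+1))(x) = β + ω^k·(x+1)` (for `β + ω^(k+1)` in Cantor Normal Form,
i.e. `ω^(k+1) ∣ β`).  `HardyRel h α x y` means `h^α(x) = y`. -/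
inductive HardyRel (h : ℕ → ℕ) : Ordinal → ℕ → ℕ → Prop
  | zero (x : ℕ) : HardyRel h 0 x x
  | succ (α : Ordinal) (x y : ℕ) : HardyRel h α (h x) y → HardyRel h (α + 1) x y
  | top (x y : ℕ) : HardyRel h (omega0 ^ (x + 1 : ℕ)) x y →
      HardyRel h (omega0 ^ omega0) x y
  | limit (β : Ordinal) (k x y : ℕ) : omega0 ^ (k + 1) ∣ β →
      HardyRel h (β + omega0 ^ k * ((x + 1 : ℕ) : Ordinal)) x y →
      HardyRel h (β + omega0 ^ (k + 1)) x y


/-- The graph of the Cichoń hierarchy `h_α` for ordinals `α ≤ ω^ω`, with the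
same standard fundamental sequences.  `CichonRel h α x n` means `h_α(x) = n`. -/
inductive CichonRel (h : ℕ → ℕ) : Ordinal → ℕ → ℕ → Prop
  | zero (x : ℕ) : CichonRel h 0 x 0
  | succ (α : Ordinal) (x n : ℕ) : CichonRel h α (h x) n → CichonRel h (α + 1) x (n + 1)
  | top (x n : ℕ) : CichonRel h (omega0 ^ (x + 1 : ℕ)) x n →
      CichonRel h (omega0 ^ omega0) x n
  | limit (β : Ordinal) (k x n : ℕ) : omega0 ^ (k + 1) ∣ β →
      CichonRel h (β + omega0 ^ k * ((x + 1 : ℕ) : Ordinal)) x n →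
      CichonRel h (β + omega0 ^ (k + 1)) x n

section Aux

open Order

universe u

private lemma pow_pos' (k : ℕ) : (0:Ordinal) < omega0 ^ k := by
  rw [← opow_natCast]; exact opow_pos _ omega0_pos

private lemma pow_limit (k : ℕ) : IsSuccLimit (omega0 ^ (k+1) : Ordinal) := by
  rw [pow_succ]
  exact isSuccLimit_mul_right (pow_pos' k) isSuccLimit_omega0

private lemma not_succ_of_limit {γ o : Ordinal} (ho : IsSuccLimit o) : γ + 1 ≠ o := by
  intro hq
  rw [add_one_eq_succ] at hq
  have h1 : γ < o := hq ▸ lt_succ γ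
  have := ho.succ_lt h1
  rw [hq] at this
  exact this.false

private lemma limit_isLimit (β : Ordinal) (k : ℕ) : IsSuccLimit (β + omega0 ^ (k+1)) :=
  isSuccLimit_add _ (pow_limit k)

/-- Uniqueness of the CNF-style decomposition `β + ω^(k+1)` with `ω^(k+1) ∣ β`. -/
private lemma limit_unique_aux {β β' : Ordinal} {k j : ℕ}
    (hd : omega0 ^ (k+1) ∣ β) (hd' : omega0 ^ (j+1) ∣ β')
    (he : β + omega0 ^ (k+1) = β' + omega0 ^ (j+1)) (hkj : k < j) : False := by
  obtain ⟨γ, rfl⟩ := hd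
  obtain ⟨γ', rfl⟩ := hd'
  rw [show omega0 ^ (k+1) * γ + omega0 ^ (k+1) = omega0 ^ (k+1) * (γ + 1) by
        rw [mul_add, mul_one],
      show omega0 ^ (j+1) * γ' + omega0 ^ (j+1) = omega0 ^ (j+1) * (γ' + 1) by
        rw [mul_add, mul_one],
      show (omega0 ^ (j+1) : Ordinal) = omega0 ^ (k+1) * omega0 ^ (j - k) by
        rw [← pow_add]; congr 1; omega,
      mul_assoc] at he
  have he2 : γ + 1 = omega0 ^ (j - k) * (γ' + 1) :=
    (mul_left_cancel_iff_of_pos (pow_pos' (k+1))).mp he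
  have hlim : IsSuccLimit (omega0 ^ (j - k) * (γ' + 1)) := by
    have : j - k = (j - k - 1) + 1 := by omega
    rw [this]
    exact isSuccLimit_mul_left (pow_limit _)
      (lt_of_lt_of_le zero_lt_one (le_add_self : (1:Ordinal) ≤ γ' + 1))
  exact not_succ_of_limit hlim he2

private lemma limit_unique {β β' : Ordinal} {k j : ℕ}
    (hd : omega0 ^ (k+1) ∣ β) (hd' : omega0 ^ (j+1) ∣ β')
    (he : β + omega0 ^ (k+1) = β' + omega0 ^ (j+1)) : k = j ∧ β = β' := by
  have hk : k = j := by
    rcases lt_trichotomy k j with hlt | heq | hgt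
    · exact absurd (limit_unique_aux hd hd' he hlt) id
    · exact heq
    · exact absurd (limit_unique_aux hd' hd he.symm hgt) id
  subst hk
  refine ⟨rfl, ?_⟩
  obtain ⟨γ, rfl⟩ := hd
  obtain ⟨γ', rfl⟩ := hd'
  rw [show omega0 ^ (k+1) * γ + omega0 ^ (k+1) = omega0 ^ (k+1) * (γ + 1) by
        rw [mul_add, mul_one],
      show omega0 ^ (k+1) * γ' + omega0 ^ (k+1) = omega0 ^ (k+1) * (γ' + 1) by
        rw [mul_add, mul_one]] at he
  have := (mul_left_cancel_iff_of_pos (pow_pos' (k+1))).mp he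
  have hγ : γ = γ' := by
    rwa [add_one_eq_succ, add_one_eq_succ, Order.succ_eq_succ_iff] at this
  rw [hγ]

/-- `ω^ω` is not of the form `β + ω^(k+1)` with `ω^(k+1) ∣ β`. -/
private lemma top_ne_limit {β : Ordinal} {k : ℕ} (hd : omega0 ^ (k+1) ∣ β) :
    (omega0 ^ omega0 : Ordinal) ≠ β + omega0 ^ (k+1) := by
  intro he
  obtain ⟨γ, rfl⟩ := hd
  rw [show omega0 ^ (k+1) * γ + omega0 ^ (k+1) = omega0 ^ (k+1) * (γ + 1) by
        rw [mul_add, mul_one]] at he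
  have hdvd : (omega0 ^ ((k+2 : ℕ) : Ordinal) : Ordinal) ∣ omega0 ^ omega0 :=
    opow_dvd_opow _ (le_of_lt (nat_lt_omega0 _))
  rw [opow_natCast, he, show (omega0 ^ (k+2) : Ordinal) = omega0 ^ (k+1) * omega0 by
        rw [pow_succ]] at hdvd
  obtain ⟨δ, hδ⟩ := hdvd
  rw [mul_assoc] at hδ
  have he2 : γ + 1 = omega0 * δ := (mul_left_cancel_iff_of_pos (pow_pos' (k+1))).mp hδ
  have hδ0 : δ ≠ 0 := by
    intro h0
    rw [h0, mul_zero] at he2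
    exact (add_one_eq_succ γ ▸ succ_ne_zero γ) he2
  exact not_succ_of_limit (isSuccLimit_mul_left isSuccLimit_omega0 (pos_iff_ne_zero.2 hδ0)) he2

private lemma cichon_zero_inv {h : ℕ → ℕ} {x n : ℕ} (hc : CichonRel h 0 x n) : n = 0 := by
  have key : ∀ (a : Ordinal) (x' n' : ℕ), CichonRel h a x' n' → a = 0 → n' = 0 := by
    intro a x n hc
    induction hc with
    | zero => intro _; rfl
    | succ α x n _ _ =>
        intro h0
        exact absurd h0 (add_one_eq_succ α ▸ succ_ne_zero α)
    | top x n _ _ =>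
        intro h0
        exact absurd h0 (isSuccLimit_opow one_lt_omega0 isSuccLimit_omega0).ne_zero
    | limit β k x n _ _ _ =>
        intro h0
        exact absurd h0 (limit_isLimit β k).ne_zero
  exact key 0 x n hc rfl

private lemma cichon_succ_inv {h : ℕ → ℕ} {α : Ordinal} {x n : ℕ}
    (hc : CichonRel h (α + 1) x n) : ∃ m, n = m + 1 ∧ CichonRel h α (h x) m := by
  have key : ∀ (a : Ordinal) (x' n' : ℕ), CichonRel h a x' n' → a = α + 1 →
      ∃ m, n' = m + 1 ∧ CichonRel h α (h x') m := by
    intro a x n hc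
    induction hc with
    | zero => intro h0; exact absurd h0.symm (add_one_eq_succ α ▸ succ_ne_zero α)
    | succ α' x n hprev _ =>
        intro h0
        have : α' = α := by
          rwa [add_one_eq_succ, add_one_eq_succ, Order.succ_eq_succ_iff] at h0
        subst this
        exact ⟨n, rfl, hprev⟩
    | top x n _ _ =>
        intro h0
        exact absurd h0.symm
          (not_succ_of_limit (isSuccLimit_opow one_lt_omega0 isSuccLimit_omega0))
    | limit β k x n _ _ _ =>
        intro h0
        exact absurd h0.symm (not_succ_of_limit (limit_isLimit β k))
  exact key _ x n hc rfl

private lemma cichon_top_inv {h : ℕ → ℕ} {x n : ℕ}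
    (hc : CichonRel.{u} h (omega0 ^ omega0) x n) :
    CichonRel.{u} h (omega0 ^ (x + 1 : ℕ)) x n := by
  have key : ∀ (a : Ordinal) (x' n' : ℕ), CichonRel h a x' n' → a = omega0 ^ omega0 →
      CichonRel h (omega0 ^ (x' + 1 : ℕ)) x' n' := by
    intro a x n hc
    induction hc with
    | zero =>
        intro h0
        exact absurd h0.symm (isSuccLimit_opow one_lt_omega0 isSuccLimit_omega0).ne_zero
    | succ α' x n _ _ =>
        intro h0
        exact absurd h0 (not_succ_of_limit (isSuccLimit_opow one_lt_omega0 isSuccLimit_omega0))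
    | top x n hprev _ => intro _; exact hprev
    | limit β k x n hd _ _ =>
        intro h0
        exact absurd h0.symm (top_ne_limit hd)
  exact key _ x n hc rfl

private lemma cichon_limit_inv {h : ℕ → ℕ} {β : Ordinal} {k x n : ℕ}
    (hd : omega0 ^ (k+1) ∣ β) (hc : CichonRel h (β + omega0 ^ (k+1)) x n) :
    CichonRel h (β + omega0 ^ k * ((x + 1 : ℕ) : Ordinal)) x n := by
  have key : ∀ (a : Ordinal) (x' n' : ℕ), CichonRel h a x' n' → a = β + omega0 ^ (k+1) →
      CichonRel h (β + omega0 ^ k * ((x' + 1 : ℕ) : Ordinal)) x' n' := by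
    intro a x n hc
    induction hc with
    | zero =>
        intro h0
        exact absurd h0.symm (limit_isLimit β k).ne_zero
    | succ α' x n _ _ =>
        intro h0
        exact absurd h0 (not_succ_of_limit (limit_isLimit β k))
    | top x n _ _ =>
        intro h0
        exact absurd h0 (top_ne_limit hd)
    | limit β' k' x n hd' hprev _ =>
        intro h0
        obtain ⟨hk, hβ⟩ := limit_unique hd' hd h0
        subst hk; subst hβ
        exact hprev
  exact key _ x n hc rfl

end Aux

/-- For every monotone inflationary `h : ℕ → ℕ`, every ordinal `α ≤ ω^ω` and
every `x`, iterating `h` exactly `h_α(x)` times starting from `x` yields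
`h^α(x)`. -/
theorem stmt8 (h : ℕ → ℕ) (hmono : Monotone h) (hinfl : ∀ x, x ≤ h x)
    (α : Ordinal) (hα : α ≤ omega0 ^ omega0) :
    ∀ x n y, CichonRel h α x n → HardyRel h α x y → h^[n] x = y := by
  clear hα
  intro x n y hc hH
  induction hH generalizing n with
  | zero x =>
      obtain rfl := cichon_zero_inv hc
      rfl
  | succ α x y _ ih =>
      obtain ⟨m, rfl, hm⟩ := cichon_succ_inv hc
      rw [Function.iterate_succ_apply]
      exact ih m hm
  | top x y _ ih => exact ih n (cichon_top_inv hc)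
  | limit β k x y hd _ ih => exact ih n (cichon_limit_inv hd hc)
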